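/- Let F : [0,1] → ℝ be strictly concave with F(0) = 0 and F(1) = 1. Fix k ≥ 2 and define, for 0 = r_0 < r_1 < ... < r_{k-1} < r_k = 1, C(R) = ∑_{j=1}^k (r_j - r_{j-1})(F(r_j) - F(r_{j-1})). If R* = (r_1*,...,r_{k-1}*) minimizes C over all such strictly increasing tuples, then the consecutive widths are monotone non-decreasing: r_1* - r_0* ≤ r_2* - r_1* ≤ ... ≤ r_k* - r_{k-1}*. -/

import Mathlib

theorem stmt_5 (F : ℝ → ℝ) (hF : StrictConcaveOn ℝ (Set.Icc (0 : ℝ) 1) F)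
    (hF0 : F 0 = 0) (hF1 : F 1 = 1) (k : ℕ) (hk : 2 ≤ k)
    (r : ℕ → ℝ) (hr0 : r 0 = 0) (hrk : r k = 1) (hmono : ∀ j < k, r j < r (j + 1))
    (hopt : ∀ r' : ℕ → ℝ, r' 0 = 0 → r' k = 1 → (∀ j < k, r' j < r' (j + 1)) →
      (∑ j ∈ Finset.range k, (r (j + 1) - r j) * (F (r (j + 1)) - F (r j))) ≤
        ∑ j ∈ Finset.range k, (r' (j + 1) - r' j) * (F (r' (j + 1)) - F (r' j))) :
    ∀ j, j + 1 < k → r (j + 1) - r j ≤ r (j + 2) - r (j + 1) := by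
  intro j hj
  by_contra hcon
  push_neg at hcon
  have hjk : j < k := by omega
  have hab : r j < r (j + 1) := hmono j hjk
  have hbc : r (j + 1) < r (j + 2) := hmono (j + 1) hj
  set a := r j with ha
  set b := r (j + 1) with hb
  set c := r (j + 2) with hc
  -- monotonicity of r on [0, k]
  have hle : ∀ i' ≤ k, ∀ i ≤ i', r i ≤ r i' := by
    intro i' hi'k
    induction i' with
    | zero => intro i hi; have h0 : i = 0 := Nat.le_zero.mp hi; exact le_of_eq (by rw [h0])
    | succ n ih =>
      intro i hi
      rcases Nat.eq_or_lt_of_le hi with h | h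
      · simp [h]
      · have h1 : i ≤ n := by omega
        have h2 : r i ≤ r n := ih (by omega) i h1
        have h3 : r n < r (n + 1) := hmono n (by omega)
        linarith
  have haI : a ∈ Set.Icc (0 : ℝ) 1 := by
    constructor
    · have := hle j (by omega) 0 (by omega); rw [hr0] at this; exact this
    · have := hle k le_rfl j (by omega); rw [hrk] at this; exact this
  have hcI : c ∈ Set.Icc (0 : ℝ) 1 := by
    constructor
    · have := hle (j + 2) (by omega) 0 (by omega); rw [hr0] at this; exact this
    · have := hle k le_rfl (j + 2) (by omega); rw [hrk] at this; exact this
  have hca : (0 : ℝ) < c - a := by linarith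
  have hcane : c - a ≠ 0 := ne_of_gt hca
  have hac : a ≠ c := by intro h; rw [h] at hca; linarith
  have ht1 : (0 : ℝ) < (c - b) / (c - a) := div_pos (by linarith) hca
  have ht2 : (0 : ℝ) < (b - a) / (c - a) := div_pos (by linarith) hca
  have hsum1 : (c - b) / (c - a) + (b - a) / (c - a) = 1 := by field_simp; ring
  -- strict concavity at b
  have hFb := hF.2 haI hcI hac ht1 ht2 hsum1
  have hptb : ((c - b) / (c - a)) • a + ((b - a) / (c - a)) • c = b := by
    simp only [smul_eq_mul]; field_simp; ring
  rw [hptb] at hFb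
  simp only [smul_eq_mul] at hFb
  -- strict concavity at the reflected point a + c - b
  have hsum2 : (b - a) / (c - a) + (c - b) / (c - a) = 1 := by field_simp; ring
  have hFm := hF.2 haI hcI hac ht2 ht1 hsum2
  have hptm : ((b - a) / (c - a)) • a + ((c - b) / (c - a)) • c = a + c - b := by
    simp only [smul_eq_mul]; field_simp; ring
  rw [hptm] at hFm
  simp only [smul_eq_mul] at hFm
  have hcomb : (c - b) / (c - a) * F a + (b - a) / (c - a) * F c
      + ((b - a) / (c - a) * F a + (c - b) / (c - a) * F c) = F a + F c := by
    field_simp; ring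
  have Hsum : F a + F c < F b + F (a + c - b) := by linarith
  -- the perturbed tuple
  set r' : ℕ → ℝ := fun i => if i = j + 1 then a + c - b else r i with hr'
  have hr'0 : r' 0 = 0 := by
    simp only [hr']; rw [if_neg (by omega)]; exact hr0
  have hr'k : r' k = 1 := by
    simp only [hr']; rw [if_neg (by omega)]; exact hrk
  have hr'mono : ∀ i < k, r' i < r' (i + 1) := by
    intro i hik
    by_cases h1 : i = j
    · subst h1
      simp only [hr']
      rw [if_neg (by omega), if_pos trivial]
      linarith
    · by_cases h2 : i = j + 1
      · subst h2
        simp only [hr']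
        rw [if_pos trivial, if_neg (by omega)]
        have : r (j + 1 + 1) = c := rfl
        rw [this]; linarith
      · simp only [hr']
        rw [if_neg h2, if_neg (by omega)]
        exact hmono i hik
  have hineq := hopt r' hr'0 hr'k hr'mono
  -- compute the difference of the two sums
  set d : ℕ → ℝ := fun i =>
    (r' (i + 1) - r' i) * (F (r' (i + 1)) - F (r' i))
      - (r (i + 1) - r i) * (F (r (i + 1)) - F (r i)) with hd
  have hdiff : (∑ i ∈ Finset.range k, (r' (i + 1) - r' i) * (F (r' (i + 1)) - F (r' i)))
      - (∑ i ∈ Finset.range k, (r (i + 1) - r i) * (F (r (i + 1)) - F (r i)))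
      = ∑ i ∈ Finset.range k, d i := by
    rw [← Finset.sum_sub_distrib]
  have hsub : ({j, j + 1} : Finset ℕ) ⊆ Finset.range k := by
    intro i hi
    simp only [Finset.mem_insert, Finset.mem_singleton] at hi
    rcases hi with h | h <;> simp [Finset.mem_range] <;> omega
  have hzero : ∀ i ∈ Finset.range k, i ∉ ({j, j + 1} : Finset ℕ) → d i = 0 := by
    intro i _ hi
    simp only [Finset.mem_insert, Finset.mem_singleton, not_or] at hi
    simp only [hd, hr']
    rw [if_neg hi.2, if_neg (by omega)]
    ring
  have hsum_pair : ∑ i ∈ Finset.range k, d i = d j + d (j + 1) := by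
    rw [← Finset.sum_subset hsub hzero]
    rw [Finset.sum_pair (by omega : j ≠ j + 1)]
  have hdj : d j = (c - b) * (F (a + c - b) - F a) - (b - a) * (F b - F a) := by
    simp only [hd, hr']
    rw [if_pos trivial, if_neg (by omega), ← ha, ← hb]
    ring
  have hdj1 : d (j + 1) = (b - a) * (F c - F (a + c - b)) - (c - b) * (F c - F b) := by
    simp only [hd, hr']
    rw [if_pos trivial, if_neg (by omega)]
    have h2 : r (j + 1 + 1) = c := rfl
    rw [h2, ← hb]
    ring
  have hDpos : (0 : ℝ) < 2 * b - a - c := by linarith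
  have hneg : d j + d (j + 1) < 0 := by
    rw [hdj, hdj1]
    nlinarith [mul_pos hDpos (by linarith : (0:ℝ) < F b + F (a + c - b) - F a - F c)]
  rw [hsum_pair] at hdiff
  linarith
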